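/- Let K be a totally real number field and Q(x,y) = αx² + βxy + ηy² a totally positive definite binary quadratic form over O_K. If both α and η are indecomposable totally positive integers of O_K and β ≠ 0, then Q is additively indecomposable. -/
import Mathlib


open NumberField

/-- `a x² + b xy + c y²` over `K` is totally positive semi-definite. -/
def TPSDK (K : Type*) [Field K] (a b c : K) : Prop :=
  ∀ σ : K →+* ℝ, ∀ u v : ℝ, 0 ≤ σ a * u ^ 2 + σ b * (u * v) + σ c * v ^ 2

/-- `a x² + b xy + c y²` over `K` is totally positive definite. -/
def TPDK (K : Type*) [Field K] (a b c : K) : Prop :=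
  ∀ σ : K →+* ℝ, ∀ u v : ℝ, (u ≠ 0 ∨ v ≠ 0) →
    0 < σ a * u ^ 2 + σ b * (u * v) + σ c * v ^ 2

/-- `x ∈ 𝓞 K` is totally positive. -/
def TotPosI (K : Type*) [Field K] [NumberField K] (x : 𝓞 K) : Prop :=
  ∀ σ : K →+* ℝ, 0 < σ (x : K)

/-- A linear function that is everywhere nonnegative has zero slope. -/
lemma linzero (A B : ℝ) (h : ∀ v : ℝ, 0 ≤ A + B * v) : B = 0 := by
  by_contra hB
  have h1 := h ((-A - 1) / B)
  have h2 : B * ((-A - 1) / B) = -A - 1 := by field_simp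
  rw [h2] at h1
  linarith

lemma coe_zero_of_emb {K : Type*} [Field K] [NumberField K] (σ : K →+* ℝ) (x : 𝓞 K)
    (h : σ (x : K) = 0) : x = 0 := by
  have : (x : K) = 0 := σ.injective (by rw [h, map_zero])
  exact_mod_cast this

/-- Key lemma: if in a decomposition the first form has zero `x²`-coefficient,
we get a contradiction. -/
lemma key (K : Type*) [Field K] [NumberField K] (τ : K →+* ℝ)
    (β η b₁ c₁ a₂ b₂ c₂ : 𝓞 K)
    (h1 : TPSDK K 0 (b₁ : K) (c₁ : K)) (h2 : TPSDK K (a₂ : K) (b₂ : K) (c₂ : K))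
    (hn1 : ¬(b₁ = 0 ∧ c₁ = 0))
    (hbs : b₁ + b₂ = β) (hcs : c₁ + c₂ = η)
    (hηind : ¬ ∃ x y : 𝓞 K, TotPosI K x ∧ TotPosI K y ∧ x + y = η)
    (hβ : β ≠ 0) : False := by
  -- b₁ = 0
  have hb1 : b₁ = 0 := by
    apply coe_zero_of_emb τ
    apply linzero (τ (c₁ : K))
    intro v
    have := h1 τ v 1
    simp only [map_zero] at this
    nlinarith [this]
  have hc1 : c₁ ≠ 0 := fun h => hn1 ⟨hb1, h⟩
  -- c₁ is totally positive
  have hc1pos : TotPosI K c₁ := by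
    intro σ
    have h0 : 0 ≤ σ (c₁ : K) := by simpa using h1 σ 0 1
    rcases lt_or_eq_of_le h0 with h | h
    · exact h
    · exact absurd (coe_zero_of_emb σ c₁ h.symm) hc1
  -- c₂ = 0
  have hc2 : c₂ = 0 := by
    by_contra hc2ne
    apply hηind
    refine ⟨c₁, c₂, hc1pos, ?_, hcs⟩
    intro σ
    have h0 : 0 ≤ σ (c₂ : K) := by simpa using h2 σ 0 1
    rcases lt_or_eq_of_le h0 with h | h
    · exact h
    · exact absurd (coe_zero_of_emb σ c₂ h.symm) hc2ne
  -- b₂ = 0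
  have hb2 : b₂ = 0 := by
    apply coe_zero_of_emb τ
    apply linzero (τ (a₂ : K))
    intro v
    have := h2 τ 1 v
    rw [hc2] at this
    simpa using this
  apply hβ
  rw [← hbs, hb1, hb2, add_zero]

/-- Let `K` be totally real and `Q(x,y) = αx² + βxy + ηy²` totally positive
definite over `𝓞 K`. If `α` and `η` are indecomposable totally positive integers
and `β ≠ 0`, then `Q` is additively indecomposable. -/
theorem stmt7 (K : Type*) [Field K] [NumberField K]
    (htr : ∀ σ : K →+* ℂ, ComplexEmbedding.IsReal σ)
    (α β η : 𝓞 K)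
    (hQ : TPDK K (α : K) (β : K) (η : K))
    (hαpos : TotPosI K α) (hηpos : TotPosI K η)
    (hαind : ¬ ∃ x y : 𝓞 K, TotPosI K x ∧ TotPosI K y ∧ x + y = α)
    (hηind : ¬ ∃ x y : 𝓞 K, TotPosI K x ∧ TotPosI K y ∧ x + y = η)
    (hβ : β ≠ 0) :
    ¬ ∃ a₁ b₁ c₁ a₂ b₂ c₂ : 𝓞 K,
      TPSDK K a₁ b₁ c₁ ∧ TPSDK K a₂ b₂ c₂ ∧
      ¬(a₁ = 0 ∧ b₁ = 0 ∧ c₁ = 0) ∧ ¬(a₂ = 0 ∧ b₂ = 0 ∧ c₂ = 0) ∧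
      a₁ + a₂ = α ∧ b₁ + b₂ = β ∧ c₁ + c₂ = η := by
  -- a real embedding of K
  obtain ⟨φ⟩ : Nonempty (K →+* ℂ) := inferInstance
  have τ : K →+* ℝ := (htr φ).embedding
  rintro ⟨a₁, b₁, c₁, a₂, b₂, c₂, h1, h2, hn1, hn2, has, hbs, hcs⟩
  -- each aᵢ is either 0 or totally positive
  have key_a : ∀ (a b c : 𝓞 K), TPSDK K (a : K) (b : K) (c : K) →
      a = 0 ∨ TotPosI K a := by
    intro a b c h
    by_cases hpos : TotPosI K a
    · exact Or.inr hpos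
    · left
      simp only [TotPosI, not_forall, not_lt] at hpos
      obtain ⟨σ, hσ⟩ := hpos
      have h0 : 0 ≤ σ (a : K) := by simpa using h σ 1 0
      exact coe_zero_of_emb σ a (le_antisymm hσ h0)
  rcases key_a a₁ b₁ c₁ h1 with ha1 | ha1pos
  · -- a₁ = 0
    subst ha1
    push_cast at h1
    refine key K τ β η b₁ c₁ a₂ b₂ c₂ h1 h2 ?_ hbs hcs hηind hβ
    intro ⟨hx, hy⟩
    exact hn1 ⟨rfl, hx, hy⟩
  rcases key_a a₂ b₂ c₂ h2 with ha2 | ha2pos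
  · -- a₂ = 0
    subst ha2
    push_cast at h2
    refine key K τ β η b₂ c₂ a₁ b₁ c₁ h2 h1 ?_ (by rw [add_comm]; exact hbs)
      (by rw [add_comm]; exact hcs) hηind hβ
    intro ⟨hx, hy⟩
    exact hn2 ⟨rfl, hx, hy⟩
  · exact hαind ⟨a₁, a₂, ha1pos, ha2pos, has⟩
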